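/- Consider the two-item all-pay auction with B_1 ≠ B_2, let s be the player with the larger budget and w the other, and set L_j = min{B_1, B_2, v_{1j}, v_{2j}}. Assume v_{s1} = L_1, v_{s2} = L_2, and additionally L_1/v_{w1} + L_2/v_{w2} ≥ 1. Define T_1 = L_1 − v_{w1} + (L_2/v_{w2})·v_{w1} and T_2 = L_2 − v_{w2} + (L_1/v_{w1})·v_{w2}. Then the following profile is a Nash equilibrium: player s's strategy is the mixture that, with probability L_1/v_{w1} + L_2/v_{w2} − 1, is uniform on the segment joining (0, T_2) to (T_1, 0); with probability (L_1 − T_1)/v_{w1}, is uniform on the segment {(t, 0) : t ∈ [T_1, L_1]}; and with probability (L_2 − T_2)/v_{w2}, is uniform on the segment {(0, t) : t ∈ [T_2, L_2]}. Player w's strategy is the uniform distribution on the segment joining (0, L_2) to (L_1, 0). -/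

import Mathlib

open MeasureTheory Set

noncomputable section

/-- `L_j = min {B₁, B₂, v_{1j}, v_{2j}}` for item `j` of the two-item auction. -/
def Lval2 (B : Fin 2 → ℝ) (v : Fin 2 → Fin 2 → ℝ) (j : Fin 2) : ℝ :=
  min (min (B 0) (B 1)) (min (v 0 j) (v 1 j))

/-- Probability that player `i` wins item `j` when bidding `xi` on it while the
opponent bids `xo`: the strictly higher bid wins; on a tie at `L_j` the player with
the strictly larger `min {Bᵢ, v_{ij}}` wins, and all other ties are fair coins. -/
def winProb2 (B : Fin 2 → ℝ) (v : Fin 2 → Fin 2 → ℝ) (i j : Fin 2) (xi xo : ℝ) : ℝ :=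
  if xo < xi then 1
  else if xi < xo then 0
  else if xi = Lval2 B v j ∧ min (B (1 - i)) (v (1 - i) j) < min (B i) (v i j) then 1
  else if xi = Lval2 B v j ∧ min (B i) (v i j) < min (B (1 - i)) (v (1 - i) j) then 0
  else 1 / 2

/-- Expected total utility of player `i` from the pure bid vectors `p` (own) and
`q` (opponent): the sum over the two items of the item payoffs. -/
def payoff2 (B : Fin 2 → ℝ) (v : Fin 2 → Fin 2 → ℝ) (i : Fin 2) (p q : ℝ × ℝ) : ℝ :=
  (winProb2 B v i 0 p.1 q.1 * v i 0 - p.1) +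
    (winProb2 B v i 1 p.2 q.2 * v i 1 - p.2)

/-- Feasible bid vectors of a player with budget `Bi`. -/
def Feas (Bi : ℝ) : Set (ℝ × ℝ) := {p | 0 ≤ p.1 ∧ 0 ≤ p.2 ∧ p.1 + p.2 ≤ Bi}

/-- A mixed strategy with budget `Bi`: a probability measure on the feasible set. -/
def IsStrategy2 (Bi : ℝ) (μ : Measure (ℝ × ℝ)) : Prop :=
  IsProbabilityMeasure μ ∧ μ (Feas Bi) = 1

/-- Expected utility of player `i` when he plays `μ` and the opponent plays `ν`. -/
def expUtil2 (B : Fin 2 → ℝ) (v : Fin 2 → Fin 2 → ℝ) (i : Fin 2)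
    (μ ν : Measure (ℝ × ℝ)) : ℝ :=
  ∫ p, (∫ q, payoff2 B v i p q ∂ν) ∂μ

/-- `(F 0, F 1)` is a (mixed) Nash equilibrium of the two-item all-pay auction. -/
def IsNash2 (B : Fin 2 → ℝ) (v : Fin 2 → Fin 2 → ℝ) (F : Fin 2 → Measure (ℝ × ℝ)) :
    Prop :=
  (∀ i, IsStrategy2 (B i) (F i)) ∧
  ∀ i, ∀ μ, IsStrategy2 (B i) μ →
    expUtil2 B v i μ (F (1 - i)) ≤ expUtil2 B v i (F i) (F (1 - i))

/-- The uniform distribution on the segment from `a` to `b` in the plane: the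
pushforward of the uniform distribution on `[0, 1]` under the affine
parameterization of the segment. -/
def unifSeg (a b : ℝ × ℝ) : Measure (ℝ × ℝ) :=
  Measure.map (fun t : ℝ => ((1 - t) * a.1 + t * b.1, (1 - t) * a.2 + t * b.2))
    (volume.restrict (Icc (0 : ℝ) 1))

/-! ### Auxiliary lemmas -/

/-- step function: `1` below `x`, `0` above `x`, `c` at `x`. -/
def stepF (x c y : ℝ) : ℝ := if y < x then 1 else if x < y then 0 else c

lemma stepF_meas (x c : ℝ) : Measurable (stepF x c) := by
  unfold stepF
  refine Measurable.ite measurableSet_Iio measurable_const ?_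
  exact Measurable.ite (measurableSet_Ioi (a := x)) measurable_const measurable_const

lemma integrable_stepF (x c : ℝ) (φ : ℝ → ℝ) (hφ : Measurable φ)
    (μ : Measure ℝ) [IsFiniteMeasure μ] :
    Integrable (fun t => stepF x c (φ t)) μ := by
  refine Integrable.mono' (integrable_const (max 1 |c|))
    ((stepF_meas x c).comp hφ).aestronglyMeasurable ?_
  filter_upwards with t
  unfold stepF
  split_ifs <;> simp [abs_le, le_max_iff, abs_nonneg, le_abs_self]

lemma vol_Iio_inter (r : ℝ) :
    (volume (Iio r ∩ Icc (0:ℝ) 1)).toReal = max 0 (min r 1) := by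
  rcases le_or_gt r 0 with h | h
  · have : Iio r ∩ Icc (0:ℝ) 1 = ∅ := by
      ext t; simp only [mem_inter_iff, mem_Iio, mem_Icc, mem_empty_iff_false, iff_false]
      rintro ⟨h1, h2, h3⟩; linarith
    rw [this]
    simp [max_eq_left, min_le_iff, h, min_eq_left (le_trans h zero_le_one)]
  · have h1 : Ico 0 (min r 1) ⊆ Iio r ∩ Icc (0:ℝ) 1 := by
      rintro t ⟨ht0, ht1⟩
      exact ⟨lt_of_lt_of_le ht1 (min_le_left _ _),
        ht0, le_of_lt (lt_of_lt_of_le ht1 (min_le_right _ _))⟩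
    have h2 : Iio r ∩ Icc (0:ℝ) 1 ⊆ Icc 0 (min r 1) := by
      rintro t ⟨ht1, ht2, ht3⟩
      exact ⟨ht2, le_min (le_of_lt ht1) ht3⟩
    have e1 : volume (Ico (0:ℝ) (min r 1)) = ENNReal.ofReal (min r 1) := by
      rw [Real.volume_Ico]; ring_nf
    have e2 : volume (Icc (0:ℝ) (min r 1)) = ENNReal.ofReal (min r 1) := by
      rw [Real.volume_Icc]; ring_nf
    have hv : volume (Iio r ∩ Icc (0:ℝ) 1) = ENNReal.ofReal (min r 1) := by
      apply le_antisymm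
      · rw [← e2]; exact measure_mono h2
      · rw [← e1]; exact measure_mono h1
    rw [hv, ENNReal.toReal_ofReal (le_min (le_of_lt h) zero_le_one)]
    exact (max_eq_right (le_min (le_of_lt h) zero_le_one)).symm

lemma vol_Ioi_inter (r : ℝ) :
    (volume (Ioi r ∩ Icc (0:ℝ) 1)).toReal = max 0 (min (1 - r) 1) := by
  rcases le_or_gt 1 r with h | h
  · have : Ioi r ∩ Icc (0:ℝ) 1 = ∅ := by
      ext t; simp only [mem_inter_iff, mem_Ioi, mem_Icc, mem_empty_iff_false, iff_false]
      rintro ⟨h1, h2, h3⟩; linarith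
    rw [this]
    have : min (1 - r) 1 ≤ 0 := le_trans (min_le_left _ _) (by linarith)
    simp [max_eq_left this]
  · have h1 : Ioc (max r 0) 1 ⊆ Ioi r ∩ Icc (0:ℝ) 1 := by
      rintro t ⟨ht0, ht1⟩
      exact ⟨lt_of_le_of_lt (le_max_left _ _) ht0,
        le_of_lt (lt_of_le_of_lt (le_max_right _ _) ht0), ht1⟩
    have h2 : Ioi r ∩ Icc (0:ℝ) 1 ⊆ Icc (max r 0) 1 := by
      rintro t ⟨ht1, ht2, ht3⟩
      exact ⟨max_le (le_of_lt ht1) ht2, ht3⟩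
    have hv : volume (Ioi r ∩ Icc (0:ℝ) 1) = ENNReal.ofReal (1 - max r 0) := by
      apply le_antisymm
      · rw [← Real.volume_Icc (a := max r 0) (b := 1)]; exact measure_mono h2
      · rw [← Real.volume_Ioc (a := max r 0) (b := 1)]; exact measure_mono h1
    have hge : (0:ℝ) ≤ 1 - max r 0 := by
      rcases le_total r 0 with h' | h' <;> simp [max_eq_left, max_eq_right, h'] <;> linarith
    rw [hv, ENNReal.toReal_ofReal hge]
    rcases le_total r 0 with h' | h'
    · rw [max_eq_right h', min_eq_right (by linarith), max_eq_right zero_le_one]; ring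
    · rw [max_eq_left h', min_eq_left (by linarith), max_eq_right (by linarith)]

lemma ae_ne_singleton (S : Set ℝ) (r : ℝ) {f g : ℝ → ℝ}
    (h : ∀ t, t ≠ r → f t = g t) :
    f =ᶠ[ae (volume.restrict S)] g := by
  have hsub : {t : ℝ | ¬ f t = g t} ⊆ {r} := by
    intro t ht
    simp only [mem_setOf_eq] at ht
    by_contra hne
    exact ht (h t (by simpa using hne))
  refine Filter.eventuallyEq_of_mem (s := {t | f t = g t}) ?_ (fun t ht => by simpa using ht)
  rw [mem_ae_iff]
  refine measure_mono_null (by intro t ht; exact hsub (by simpa using ht)) ?_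
  exact le_antisymm (le_trans (Measure.restrict_le_self _) (by simp)) zero_le

lemma integral_stepF_inc {a b : ℝ} (hab : a < b) (x c : ℝ) :
    ∫ t in Icc (0:ℝ) 1, stepF x c ((1 - t) * a + t * b)
      = max 0 (min ((x - a)/(b - a)) 1) := by
  have hba : (0:ℝ) < b - a := by linarith
  set r := (x - a)/(b - a) with hr
  have key : ∀ t : ℝ, t ≠ r → stepF x c ((1 - t) * a + t * b)
      = (Iio r).indicator (fun _ => (1:ℝ)) t := by
    intro t ht
    have hlt : ((1 - t) * a + t * b < x) ↔ t < r := by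
      rw [hr, lt_div_iff₀ hba]; constructor <;> intro h <;> nlinarith
    have hgt : (x < (1 - t) * a + t * b) ↔ r < t := by
      rw [hr, div_lt_iff₀ hba]; constructor <;> intro h <;> nlinarith
    rcases lt_trichotomy t r with h | h | h
    · rw [indicator_of_mem (by exact h)]
      unfold stepF; rw [if_pos (hlt.2 h)]
    · exact absurd h ht
    · rw [indicator_of_notMem (by simp only [mem_Iio]; linarith)]
      unfold stepF; rw [if_neg (by rw [hlt]; linarith), if_pos (hgt.2 h)]
  rw [integral_congr_ae (ae_ne_singleton _ r key)]
  rw [integral_indicator measurableSet_Iio]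
  rw [Measure.restrict_restrict measurableSet_Iio]
  rw [integral_const]
  simp only [smul_eq_mul, mul_one]
  rw [measureReal_def, Measure.restrict_apply_univ]
  exact vol_Iio_inter r

lemma integral_stepF_dec {a b : ℝ} (hab : b < a) (x c : ℝ) :
    ∫ t in Icc (0:ℝ) 1, stepF x c ((1 - t) * a + t * b)
      = max 0 (min ((x - b)/(a - b)) 1) := by
  have hba : (0:ℝ) < a - b := by linarith
  set r := (a - x)/(a - b) with hr
  have key : ∀ t : ℝ, t ≠ r → stepF x c ((1 - t) * a + t * b)
      = (Ioi r).indicator (fun _ => (1:ℝ)) t := by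
    intro t ht
    have hlt : ((1 - t) * a + t * b < x) ↔ r < t := by
      rw [hr, div_lt_iff₀ hba]; constructor <;> intro h <;> nlinarith
    have hgt : (x < (1 - t) * a + t * b) ↔ t < r := by
      rw [hr, lt_div_iff₀ hba]; constructor <;> intro h <;> nlinarith
    rcases lt_trichotomy t r with h | h | h
    · rw [indicator_of_notMem (by simp only [mem_Ioi]; linarith)]
      unfold stepF; rw [if_neg (by rw [hlt]; linarith), if_pos (hgt.2 h)]
    · exact absurd h ht
    · rw [indicator_of_mem (by exact h)]
      unfold stepF; rw [if_pos (hlt.2 h)]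
  rw [integral_congr_ae (ae_ne_singleton _ r key)]
  rw [integral_indicator measurableSet_Ioi]
  rw [Measure.restrict_restrict measurableSet_Ioi]
  rw [integral_const]
  simp only [smul_eq_mul, mul_one]
  rw [measureReal_def, Measure.restrict_apply_univ]
  rw [vol_Ioi_inter r]
  congr 1
  congr 1
  rw [hr]
  field_simp
  ring

/-- key algebraic clamp identity -/
lemma wclamp {a w m x : ℝ} (ha : 0 < a) (hw : 0 ≤ w) :
    (w * max 0 (min ((x - m)/(w * a)) 1)) * a = min x (m + w * a) - min x m := by
  rcases eq_or_lt_of_le hw with h0 | h0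
  · simp [← h0]
  · have hc : 0 < w * a := mul_pos h0 ha
    rcases le_total x m with hxm | hxm
    · have h1 : (x - m)/(w*a) ≤ 0 :=
        div_nonpos_of_nonpos_of_nonneg (by linarith) (le_of_lt hc)
      rw [min_eq_left (le_trans h1 zero_le_one), max_eq_left h1,
        min_eq_left hxm, min_eq_left (by linarith)]
      ring
    · rcases le_total x (m + w * a) with hx2 | hx2
      · have h1 : (x - m)/(w*a) ≤ 1 := by rw [div_le_one hc]; linarith
        have h2 : 0 ≤ (x - m)/(w*a) := div_nonneg (by linarith) (le_of_lt hc)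
        rw [min_eq_left h1, max_eq_right h2, min_eq_left hx2, min_eq_right hxm]
        field_simp
      · have h1 : 1 ≤ (x - m)/(w*a) := by rw [le_div_iff₀ hc]; linarith
        rw [min_eq_right h1, max_eq_right zero_le_one, min_eq_right hx2, min_eq_right hxm]
        ring

lemma clamp_mul {L x : ℝ} (hL : 0 < L) (hx : 0 ≤ x) :
    max 0 (min (x / L) 1) * L = min x L := by
  have := wclamp (a := L) (w := 1) (m := 0) (x := x) hL zero_le_one
  simp only [one_mul, sub_zero, zero_add] at this
  rw [this, min_eq_right hx]
  ring

/-- tie value of `winProb2` -/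
def tieVal (B : Fin 2 → ℝ) (v : Fin 2 → Fin 2 → ℝ) (i j : Fin 2) (xi : ℝ) : ℝ :=
  if xi = Lval2 B v j ∧ min (B (1 - i)) (v (1 - i) j) < min (B i) (v i j) then 1
  else if xi = Lval2 B v j ∧ min (B i) (v i j) < min (B (1 - i)) (v (1 - i) j) then 0
  else 1 / 2

lemma winProb2_eq (B : Fin 2 → ℝ) (v : Fin 2 → Fin 2 → ℝ) (i j : Fin 2) (xi xo : ℝ) :
    winProb2 B v i j xi xo = stepF xi (tieVal B v i j xi) xo := rfl

lemma tieVal_nonneg (B : Fin 2 → ℝ) (v : Fin 2 → Fin 2 → ℝ) (i j : Fin 2) (xi : ℝ) :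
    0 ≤ tieVal B v i j xi := by
  unfold tieVal; split_ifs <;> norm_num

lemma tieVal_le_one (B : Fin 2 → ℝ) (v : Fin 2 → Fin 2 → ℝ) (i j : Fin 2) (xi : ℝ) :
    tieVal B v i j xi ≤ 1 := by
  unfold tieVal; split_ifs <;> norm_num

lemma tieVal_ne (B : Fin 2 → ℝ) (v : Fin 2 → Fin 2 → ℝ) (i j : Fin 2) (xi : ℝ)
    (h : xi ≠ Lval2 B v j) : tieVal B v i j xi = 1/2 := by
  unfold tieVal
  rw [if_neg (by tauto), if_neg (by tauto)]

/-- affine parameterization of a segment -/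
def segParam (a b : ℝ × ℝ) : ℝ → ℝ × ℝ :=
  fun t => ((1 - t) * a.1 + t * b.1, (1 - t) * a.2 + t * b.2)

lemma segParam_meas (a b : ℝ × ℝ) : Measurable (segParam a b) := by
  unfold segParam; fun_prop

lemma unifSeg_eq_map (a b : ℝ × ℝ) :
    unifSeg a b = Measure.map (segParam a b) (volume.restrict (Icc (0:ℝ) 1)) := rfl

instance unifSeg_prob (a b : ℝ × ℝ) : IsProbabilityMeasure (unifSeg a b) := by
  constructor
  rw [unifSeg_eq_map, Measure.map_apply (segParam_meas a b) MeasurableSet.univ]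
  simp [Real.volume_Icc]

lemma unifSeg_eq_one' (a b : ℝ × ℝ) {S : Set (ℝ × ℝ)} (hS : MeasurableSet S)
    (h : ∀ t ∈ Ioo (0:ℝ) 1, segParam a b t ∈ S) : unifSeg a b S = 1 := by
  rw [unifSeg_eq_map, Measure.map_apply (segParam_meas a b) hS]
  apply le_antisymm
  · calc volume.restrict (Icc (0:ℝ) 1) (segParam a b ⁻¹' S)
        ≤ volume.restrict (Icc (0:ℝ) 1) univ := measure_mono (subset_univ _)
      _ = 1 := by simp [Real.volume_Icc]
  · calc (1:ENNReal) = volume.restrict (Icc (0:ℝ) 1) (Ioo 0 1) := by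
          rw [Measure.restrict_apply measurableSet_Ioo,
            inter_eq_left.2 Ioo_subset_Icc_self]
          simp [Real.volume_Ioo]
      _ ≤ _ := measure_mono (fun t ht => h t ht)

lemma unifSeg_eq_one (a b : ℝ × ℝ) {S : Set (ℝ × ℝ)} (hS : MeasurableSet S)
    (h : ∀ t ∈ Icc (0:ℝ) 1, segParam a b t ∈ S) : unifSeg a b S = 1 :=
  unifSeg_eq_one' a b hS (fun t ht => h t (Ioo_subset_Icc_self ht))

lemma payoff2_meas (B : Fin 2 → ℝ) (v : Fin 2 → Fin 2 → ℝ) (i : Fin 2) (p : ℝ × ℝ) :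
    Measurable (fun q => payoff2 B v i p q) := by
  unfold payoff2
  simp only [winProb2_eq]
  apply Measurable.add
  · exact (((stepF_meas _ _).comp measurable_fst).mul_const _).sub measurable_const
  · exact (((stepF_meas _ _).comp measurable_snd).mul_const _).sub measurable_const

lemma integrable_payoff2 (B : Fin 2 → ℝ) (v : Fin 2 → Fin 2 → ℝ) (i : Fin 2)
    (p : ℝ × ℝ) (μ : Measure (ℝ × ℝ)) [IsFiniteMeasure μ] :
    Integrable (fun q => payoff2 B v i p q) μ := by
  refine Integrable.mono' (integrable_const (|v i 0| + |p.1| + (|v i 1| + |p.2|)))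
    (payoff2_meas B v i p).aestronglyMeasurable ?_
  filter_upwards with q
  unfold payoff2
  have h0 : ∀ (j : Fin 2) (x xo : ℝ), ‖winProb2 B v i j x xo‖ ≤ 1 := by
    intro j x xo
    rw [winProb2_eq]
    unfold stepF
    have := tieVal_nonneg B v i j x
    have := tieVal_le_one B v i j x
    split_ifs <;> rw [Real.norm_eq_abs, abs_le] <;> constructor <;> linarith
  have h1 := h0 0 p.1 q.1
  have h2 := h0 1 p.2 q.2
  have key : ∀ (W val x : ℝ), ‖W‖ ≤ 1 → ‖W * val - x‖ ≤ |val| + |x| := by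
    intro W val x h
    rw [Real.norm_eq_abs] at h
    calc ‖W * val - x‖ ≤ ‖W * val‖ + ‖x‖ := norm_sub_le _ _
      _ = |W| * |val| + |x| := by rw [norm_mul]; rfl
      _ ≤ 1 * |val| + |x| := by nlinarith [abs_nonneg val, abs_nonneg W, norm_nonneg W]
      _ = |val| + |x| := by ring
  calc ‖winProb2 B v i 0 p.1 q.1 * v i 0 - p.1 + (winProb2 B v i 1 p.2 q.2 * v i 1 - p.2)‖
      ≤ ‖winProb2 B v i 0 p.1 q.1 * v i 0 - p.1‖ + ‖winProb2 B v i 1 p.2 q.2 * v i 1 - p.2‖ :=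
        norm_add_le _ _
    _ ≤ (|v i 0| + |p.1|) + (|v i 1| + |p.2|) := add_le_add (key _ _ _ h1) (key _ _ _ h2)

lemma integral_payoff_unifSeg (B : Fin 2 → ℝ) (v : Fin 2 → Fin 2 → ℝ) (i : Fin 2)
    (p : ℝ × ℝ) (c1 c2 d1 d2 : ℝ) :
    ∫ q, payoff2 B v i p q ∂(unifSeg (c1, c2) (d1, d2))
      = ((∫ t in Icc (0:ℝ) 1, stepF p.1 (tieVal B v i 0 p.1) ((1-t)*c1+t*d1)) * v i 0 - p.1)
      + ((∫ t in Icc (0:ℝ) 1, stepF p.2 (tieVal B v i 1 p.2) ((1-t)*c2+t*d2)) * v i 1 - p.2) := by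
  rw [unifSeg_eq_map,
    integral_map (segParam_meas _ _).aemeasurable
      ((payoff2_meas B v i p).aestronglyMeasurable)]
  unfold payoff2 segParam
  simp only [winProb2_eq]
  rw [integral_add, integral_sub, integral_sub, integral_mul_const, integral_mul_const,
    integral_const, integral_const]
  · simp [Real.volume_Icc]
  · exact (integrable_stepF _ _ _ (by fun_prop) _).mul_const _
  · exact integrable_const _
  · exact (integrable_stepF _ _ _ (by fun_prop) _).mul_const _
  · exact integrable_const _
  · exact ((integrable_stepF _ _ _ (by fun_prop) _).mul_const _).sub (integrable_const _)
  · exact ((integrable_stepF _ _ _ (by fun_prop) _).mul_const _).sub (integrable_const _)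

lemma ae_mem_of_prob_one {X : Type*} [MeasurableSpace X] {μ : Measure X}
    [IsProbabilityMeasure μ] {S : Set X} (hS : MeasurableSet S) (h : μ S = 1) :
    ∀ᵐ p ∂μ, p ∈ S := by
  rw [ae_iff]
  have he : {p | ¬ p ∈ S} = Sᶜ := rfl
  rw [he, prob_compl_eq_zero_iff hS]
  exact h

lemma integral_le_const_of_ae {X : Type*} [MeasurableSpace X] {μ : Measure X}
    [IsProbabilityMeasure μ] {g : X → ℝ} {V : ℝ} (hV : 0 ≤ V)
    (h : ∀ᵐ p ∂μ, g p ≤ V) : ∫ p, g p ∂μ ≤ V := by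
  by_cases hint : Integrable g μ
  · calc ∫ p, g p ∂μ ≤ ∫ _p, V ∂μ := integral_mono_ae hint (integrable_const V) h
      _ = V := by simp
  · rw [integral_undef hint]; exact hV

lemma integral_eq_const_of_ae {X : Type*} [MeasurableSpace X] {μ : Measure X}
    [IsProbabilityMeasure μ] {g : X → ℝ} {V : ℝ}
    (h : ∀ᵐ p ∂μ, g p = V) : ∫ p, g p ∂μ = V := by
  rw [integral_congr_ae (show g =ᶠ[ae μ] fun _ => V from h)]
  simp

lemma seg_mem_feas : ∀ c1 c2 d1 d2 bb : ℝ, 0 ≤ c1 → 0 ≤ c2 → 0 ≤ d1 → 0 ≤ d2 →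
    c1 + c2 ≤ bb → d1 + d2 ≤ bb →
    ∀ t ∈ Icc (0:ℝ) 1, segParam (c1, c2) (d1, d2) t ∈ Feas bb := by
  intro c1 c2 d1 d2 bb h1 h2 h3 h4 h5 h6
  rintro t ⟨ht0, ht1⟩
  show 0 ≤ (1-t)*c1 + t*d1 ∧ 0 ≤ (1-t)*c2 + t*d2 ∧
    ((1-t)*c1 + t*d1) + ((1-t)*c2 + t*d2) ≤ bb
  refine ⟨by nlinarith, by nlinarith, by nlinarith⟩

lemma seg_mem_box : ∀ c1 c2 d1 d2 X Y : ℝ, 0 ≤ c1 → c1 ≤ X → 0 ≤ d1 → d1 ≤ X →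
    0 ≤ c2 → c2 ≤ Y → 0 ≤ d2 → d2 ≤ Y →
    ∀ t ∈ Icc (0:ℝ) 1, segParam (c1, c2) (d1, d2) t
      ∈ {p : ℝ × ℝ | 0 ≤ p.1 ∧ p.1 ≤ X ∧ 0 ≤ p.2 ∧ p.2 ≤ Y} := by
  intro c1 c2 d1 d2 X Y h1 h2 h3 h4 h5 h6 h7 h8
  rintro t ⟨ht0, ht1⟩
  show 0 ≤ (1-t)*c1 + t*d1 ∧ (1-t)*c1 + t*d1 ≤ X ∧
    0 ≤ (1-t)*c2 + t*d2 ∧ (1-t)*c2 + t*d2 ≤ Y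
  refine ⟨by nlinarith, by nlinarith, by nlinarith, by nlinarith⟩

lemma seg_mem_box_pos : ∀ X Y : ℝ, 0 < X → 0 < Y →
    ∀ t ∈ Ioo (0:ℝ) 1, segParam (0, Y) (X, 0) t
      ∈ {p : ℝ × ℝ | 0 < p.1 ∧ p.1 ≤ X ∧ 0 < p.2 ∧ p.2 ≤ Y} := by
  intro X Y hX hY
  rintro t ⟨ht0, ht1⟩
  show 0 < (1-t)*0 + t*X ∧ (1-t)*0 + t*X ≤ X ∧
    0 < (1-t)*Y + t*0 ∧ (1-t)*Y + t*0 ≤ Y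
  refine ⟨by nlinarith, by nlinarith, by nlinarith, by nlinarith⟩

set_option maxHeartbeats 2000000 in
/-- Case 2 of the two-item auction with asymmetric budgets (`s` has the larger
budget, `w = 1 - s`): if `v_{s1} = L₁` and `v_{s2} = L₂` (together with the mass
condition `L₁/v_{w1} + L₂/v_{w2} ≥ 1`), then the described pair of mixtures of
uniform distributions on segments is a Nash equilibrium. -/
theorem nash_two_items_case2 (B : Fin 2 → ℝ) (v : Fin 2 → Fin 2 → ℝ)
    (hB : ∀ i, 0 ≤ B i) (hv : ∀ i j, 0 < v i j)
    (s : Fin 2) (hs : B (1 - s) < B s)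
    (L1 L2 : ℝ) (hL1 : L1 = Lval2 B v 0) (hL2 : L2 = Lval2 B v 1)
    (hvs1 : v s 0 = L1) (hvs2 : v s 1 = L2)
    (hw : L1 / v (1 - s) 0 + L2 / v (1 - s) 1 ≥ 1)
    (T1 T2 : ℝ)
    (hT1 : T1 = L1 - v (1 - s) 0 + L2 / v (1 - s) 1 * v (1 - s) 0)
    (hT2 : T2 = L2 - v (1 - s) 1 + L1 / v (1 - s) 0 * v (1 - s) 1) :
    IsNash2 B v (fun k =>
      if k = s then
        ENNReal.ofReal (L1 / v (1 - s) 0 + L2 / v (1 - s) 1 - 1) •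
            unifSeg (0, T2) (T1, 0) +
          ENNReal.ofReal ((L1 - T1) / v (1 - s) 0) • unifSeg (T1, 0) (L1, 0) +
          ENNReal.ofReal ((L2 - T2) / v (1 - s) 1) • unifSeg (0, T2) (0, L2)
      else unifSeg (0, L2) (L1, 0)) := by
  classical
  -- Fin 2 arithmetic facts
  have hfin1 : ∀ t : Fin 2, 1 - (1 - t) = t := by decide
  have hfin2 : ∀ t : Fin 2, 1 - t ≠ t := by decide
  have hfin3 : ∀ i t : Fin 2, i ≠ t → i = 1 - t := by decide
  -- basic positivity and ordering facts
  have ha1 : 0 < v (1 - s) 0 := hv (1 - s) 0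
  have ha2 : 0 < v (1 - s) 1 := hv (1 - s) 1
  have hL1pos : 0 < L1 := hvs1 ▸ hv s 0
  have hL2pos : 0 < L2 := hvs2 ▸ hv s 1
  have hminB : ∀ k : Fin 2, min (B 0) (B 1) ≤ B k := by
    intro k; fin_cases k
    exacts [min_le_left _ _, min_le_right _ _]
  have hminv : ∀ (k j : Fin 2), min (v 0 j) (v 1 j) ≤ v k j := by
    intro k j; fin_cases k
    exacts [min_le_left _ _, min_le_right _ _]
  have hL1Bw : L1 ≤ B (1 - s) := by
    rw [hL1]; exact le_trans (min_le_left _ _) (hminB (1 - s))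
  have hL2Bw : L2 ≤ B (1 - s) := by
    rw [hL2]; exact le_trans (min_le_left _ _) (hminB (1 - s))
  have hL1a1 : L1 ≤ v (1 - s) 0 := by
    rw [hL1]; exact le_trans (min_le_right _ _) (hminv (1 - s) 0)
  have hL2a2 : L2 ≤ v (1 - s) 1 := by
    rw [hL2]; exact le_trans (min_le_right _ _) (hminv (1 - s) 1)
  -- the three weights
  set α : ℝ := L1 / v (1 - s) 0 + L2 / v (1 - s) 1 - 1 with hαdef
  set β' : ℝ := (L1 - T1) / v (1 - s) 0 with hβdef
  set γ' : ℝ := (L2 - T2) / v (1 - s) 1 with hγdef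
  clear_value α β' γ'
  have hα : 0 ≤ α := by rw [hαdef]; linarith [hw]
  have hT1e : T1 = α * v (1 - s) 0 := by rw [hT1, hαdef]; field_simp; ring
  have hT2e : T2 = α * v (1 - s) 1 := by rw [hT2, hαdef]; field_simp; ring
  have hβe : β' = 1 - L2 / v (1 - s) 1 := by
    rw [hβdef, hT1]; field_simp; ring
  have hγe : γ' = 1 - L1 / v (1 - s) 0 := by
    rw [hγdef, hT2]; field_simp; ring
  have hβ : 0 ≤ β' := by
    rw [hβe]; have := (div_le_one ha2).2 hL2a2; linarith
  have hγ : 0 ≤ γ' := by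
    rw [hγe]; have := (div_le_one ha1).2 hL1a1; linarith
  have hsum : α + β' + γ' = 1 := by rw [hαdef, hβe, hγe]; ring
  have hβa1 : L1 - T1 = β' * v (1 - s) 0 := by
    rw [hβdef]; field_simp
  have hγa2 : L2 - T2 = γ' * v (1 - s) 1 := by
    rw [hγdef]; field_simp
  have hγa1 : γ' * v (1 - s) 0 = v (1 - s) 0 - L1 := by
    rw [hγe]; field_simp
  have hβa2 : β' * v (1 - s) 1 = v (1 - s) 1 - L2 := by
    rw [hβe]; field_simp
  have hT1nn : 0 ≤ T1 := by rw [hT1e]; positivity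
  have hT2nn : 0 ≤ T2 := by rw [hT2e]; positivity
  have hT1L1 : T1 ≤ L1 := by nlinarith [hβa1, mul_nonneg hβ ha1.le]
  have hT2L2 : T2 ≤ L2 := by nlinarith [hγa2, mul_nonneg hγ ha2.le]
  -- the measures
  set μ1 : Measure (ℝ × ℝ) := unifSeg (0, T2) (T1, 0) with hμ1
  set μ2 : Measure (ℝ × ℝ) := unifSeg (T1, 0) (L1, 0) with hμ2
  set μ3 : Measure (ℝ × ℝ) := unifSeg (0, T2) (0, L2) with hμ3
  set μw : Measure (ℝ × ℝ) := unifSeg (0, L2) (L1, 0) with hμw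
  set Fs : Measure (ℝ × ℝ) :=
    ENNReal.ofReal α • μ1 + ENNReal.ofReal β' • μ2 + ENNReal.ofReal γ' • μ3 with hFsdef
  have hP1 : IsProbabilityMeasure μ1 := unifSeg_prob _ _
  have hP2 : IsProbabilityMeasure μ2 := unifSeg_prob _ _
  have hP3 : IsProbabilityMeasure μ3 := unifSeg_prob _ _
  have hPw : IsProbabilityMeasure μw := unifSeg_prob _ _
  clear_value μ1 μ2 μ3 μw Fs
  haveI := hP1; haveI := hP2; haveI := hP3; haveI := hPw
  -- measure computations for Fs
  have hFsSet : ∀ S : Set (ℝ × ℝ), μ1 S = 1 → μ2 S = 1 → μ3 S = 1 → Fs S = 1 := by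
    intro S h1 h2 h3
    rw [hFsdef]
    simp only [Measure.add_apply, Measure.smul_apply, smul_eq_mul, h1, h2, h3, mul_one]
    rw [← ENNReal.ofReal_add hα hβ, ← ENNReal.ofReal_add (add_nonneg hα hβ) hγ, hsum,
      ENNReal.ofReal_one]
  have hFsProb : IsProbabilityMeasure Fs :=
    ⟨hFsSet univ (measure_univ) (measure_univ) (measure_univ)⟩
  have hFeasMeas : ∀ b : ℝ, MeasurableSet (Feas b) := by
    intro b
    refine MeasurableSet.inter ?_ (MeasurableSet.inter ?_ ?_)
    · exact measurableSet_le measurable_const measurable_fst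
    · exact measurableSet_le measurable_const measurable_snd
    · exact measurableSet_le (measurable_fst.add measurable_snd) measurable_const
  have hBwBs : B (1 - s) ≤ B s := le_of_lt hs
  have hFsFeas : Fs (Feas (B s)) = 1 := by
    refine hFsSet _ ?_ ?_ ?_ <;> [rw [hμ1]; rw [hμ2]; rw [hμ3]] <;>
      refine unifSeg_eq_one _ _ (hFeasMeas _) ?_
    · exact seg_mem_feas 0 T2 T1 0 (B s) le_rfl hT2nn hT1nn le_rfl
        (by linarith) (by linarith)
    · exact seg_mem_feas T1 0 L1 0 (B s) hT1nn le_rfl hL1pos.le le_rfl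
        (by linarith) (by linarith)
    · exact seg_mem_feas 0 T2 0 L2 (B s) le_rfl hT2nn le_rfl hL2pos.le
        (by linarith) (by linarith)
  have hμwFeas : μw (Feas (B (1 - s))) = 1 := by
    rw [hμw]
    refine unifSeg_eq_one _ _ (hFeasMeas _) ?_
    exact seg_mem_feas 0 L2 L1 0 (B (1 - s)) le_rfl hL2pos.le hL1pos.le le_rfl
      (by linarith) (by linarith)
  -- formula for s's expected payoff against μw
  have hSform : ∀ p : ℝ × ℝ, 0 ≤ p.1 → 0 ≤ p.2 →
      (∫ q, payoff2 B v s p q ∂μw) = (min p.1 L1 - p.1) + (min p.2 L2 - p.2) := by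
    intro p hp1 hp2
    rw [hμw, integral_payoff_unifSeg, integral_stepF_inc hL1pos, integral_stepF_dec hL2pos,
      hvs1, hvs2]
    simp only [sub_zero]
    rw [clamp_mul hL1pos hp1, clamp_mul hL2pos hp2]
  -- formulas for w's expected payoff against the components of Fs
  have hI1 : ∀ p : ℝ × ℝ, 0 ≤ p.1 → 0 ≤ p.2 →
      α * ∫ q, payoff2 B v (1 - s) p q ∂μ1
        = min p.1 T1 + min p.2 T2 - α * (p.1 + p.2) := by
    intro p hp1 hp2
    rcases eq_or_lt_of_le hα with h0 | h0
    · have t1 : T1 = 0 := by rw [hT1e, ← h0]; ring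
      have t2 : T2 = 0 := by rw [hT2e, ← h0]; ring
      rw [t1, t2, min_eq_right hp1, min_eq_right hp2, ← h0]
      ring
    · have hT1p : 0 < T1 := by rw [hT1e]; positivity
      have hT2p : 0 < T2 := by rw [hT2e]; positivity
      rw [hμ1, integral_payoff_unifSeg, integral_stepF_inc hT1p, integral_stepF_dec hT2p]
      have w1 := wclamp (a := v (1 - s) 0) (w := α) (m := 0) (x := p.1) ha1 hα
      have w2 := wclamp (a := v (1 - s) 1) (w := α) (m := 0) (x := p.2) ha2 hα
      rw [min_eq_right hp1] at w1
      rw [min_eq_right hp2] at w2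
      simp only [sub_zero, zero_add] at w1 w2 ⊢
      rw [hT1e, hT2e]
      linear_combination w1 + w2
  have hδ : ∀ (j : Fin 2) (x : ℝ), 0 ≤ x → x = 0 → (0:ℝ) ≠ Lval2 B v j →
      stepF x (tieVal B v (1 - s) j x) 0 = if 0 < x then (1:ℝ) else 1/2 := by
    intro j x hx hx0 hL
    subst hx0
    rw [if_neg (lt_irrefl 0)]
    unfold stepF
    rw [if_neg (lt_irrefl 0), if_neg (lt_irrefl 0)]
    exact tieVal_ne _ _ _ _ _ hL
  have hδ' : ∀ (j : Fin 2) (x : ℝ), 0 ≤ x → (0:ℝ) ≠ Lval2 B v j →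
      stepF x (tieVal B v (1 - s) j x) 0 = if 0 < x then (1:ℝ) else 1/2 := by
    intro j x hx hL
    rcases eq_or_lt_of_le hx with h | h
    · exact hδ j x hx h.symm hL
    · unfold stepF
      rw [if_pos h, if_pos h]
  have hL1ne : (0:ℝ) ≠ Lval2 B v 0 := by rw [← hL1]; exact ne_of_lt hL1pos
  have hL2ne : (0:ℝ) ≠ Lval2 B v 1 := by rw [← hL2]; exact ne_of_lt hL2pos
  have hI2 : ∀ p : ℝ × ℝ, 0 ≤ p.1 → 0 ≤ p.2 →
      β' * ∫ q, payoff2 B v (1 - s) p q ∂μ2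
        = (min p.1 L1 - min p.1 T1)
          + β' * ((if 0 < p.2 then (1:ℝ) else 1/2) * v (1 - s) 1)
          - β' * (p.1 + p.2) := by
    intro p hp1 hp2
    rcases eq_or_lt_of_le hβ with h0 | h0
    · have hz : β' * v (1 - s) 0 = 0 := by rw [← h0]; ring
      have hTL : T1 = L1 := by linarith [hβa1]
      rw [hTL, ← h0]
      ring
    · have hz : 0 < β' * v (1 - s) 0 := mul_pos h0 ha1
      have hTL : T1 < L1 := by linarith [hβa1]
      rw [hμ2, integral_payoff_unifSeg, integral_stepF_inc hTL]
      simp only [mul_zero, add_zero]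
      rw [MeasureTheory.setIntegral_const]
      simp only [measureReal_def, Real.volume_Icc, sub_zero, ENNReal.ofReal_one, ENNReal.toReal_one, one_smul]
      rw [hδ' 1 p.2 hp2 hL2ne]
      have w1 := wclamp (a := v (1 - s) 0) (w := β') (m := T1) (x := p.1) ha1 hβ
      rw [← hβa1] at w1
      have hTw : T1 + (L1 - T1) = L1 := by ring
      rw [hTw] at w1
      linear_combination w1
  have hI3 : ∀ p : ℝ × ℝ, 0 ≤ p.1 → 0 ≤ p.2 →
      γ' * ∫ q, payoff2 B v (1 - s) p q ∂μ3
        = γ' * ((if 0 < p.1 then (1:ℝ) else 1/2) * v (1 - s) 0)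
          + (min p.2 L2 - min p.2 T2)
          - γ' * (p.1 + p.2) := by
    intro p hp1 hp2
    rcases eq_or_lt_of_le hγ with h0 | h0
    · have hz : γ' * v (1 - s) 1 = 0 := by rw [← h0]; ring
      have hTL : T2 = L2 := by linarith [hγa2]
      rw [hTL, ← h0]
      ring
    · have hz : 0 < γ' * v (1 - s) 1 := mul_pos h0 ha2
      have hTL : T2 < L2 := by linarith [hγa2]
      rw [hμ3, integral_payoff_unifSeg, integral_stepF_inc hTL]
      simp only [mul_zero, add_zero]
      rw [MeasureTheory.setIntegral_const]
      simp only [measureReal_def, Real.volume_Icc, sub_zero, ENNReal.ofReal_one, ENNReal.toReal_one, one_smul]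
      rw [hδ' 0 p.1 hp1 hL1ne]
      have w2 := wclamp (a := v (1 - s) 1) (w := γ') (m := T2) (x := p.2) ha2 hγ
      rw [← hγa2] at w2
      have hTw : T2 + (L2 - T2) = L2 := by ring
      rw [hTw] at w2
      linear_combination w2
  -- formula for w's expected payoff against Fs
  have hW : ∀ p : ℝ × ℝ, 0 ≤ p.1 → 0 ≤ p.2 →
      (∫ q, payoff2 B v (1 - s) p q ∂Fs)
        = min p.1 L1 + γ' * ((if 0 < p.1 then (1:ℝ) else 1/2) * v (1 - s) 0) - p.1
          + (min p.2 L2 + β' * ((if 0 < p.2 then (1:ℝ) else 1/2) * v (1 - s) 1) - p.2) := by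
    intro p hp1 hp2
    have i1 : Integrable (fun q => payoff2 B v (1 - s) p q) (ENNReal.ofReal α • μ1) :=
      (integrable_payoff2 B v (1 - s) p μ1).smul_measure ENNReal.ofReal_ne_top
    have i2 : Integrable (fun q => payoff2 B v (1 - s) p q) (ENNReal.ofReal β' • μ2) :=
      (integrable_payoff2 B v (1 - s) p μ2).smul_measure ENNReal.ofReal_ne_top
    have i3 : Integrable (fun q => payoff2 B v (1 - s) p q) (ENNReal.ofReal γ' • μ3) :=
      (integrable_payoff2 B v (1 - s) p μ3).smul_measure ENNReal.ofReal_ne_top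
    rw [hFsdef, integral_add_measure (i1.add_measure i2) i3, integral_add_measure i1 i2,
      integral_smul_measure, integral_smul_measure, integral_smul_measure,
      ENNReal.toReal_ofReal hα, ENNReal.toReal_ofReal hβ, ENNReal.toReal_ofReal hγ]
    simp only [smul_eq_mul]
    linear_combination hI1 p hp1 hp2 + hI2 p hp1 hp2 + hI3 p hp1 hp2
      - (p.1 + p.2) * hsum
  -- the equilibrium value of w
  have hWle : ∀ p : ℝ × ℝ, 0 ≤ p.1 → 0 ≤ p.2 →
      (∫ q, payoff2 B v (1 - s) p q ∂Fs)
        ≤ (v (1 - s) 0 - L1) + (v (1 - s) 1 - L2) := by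
    intro p hp1 hp2
    rw [hW p hp1 hp2]
    have d1 : (if 0 < p.1 then (1:ℝ) else 1/2) ≤ 1 := by split_ifs <;> norm_num
    have d2 : (if 0 < p.2 then (1:ℝ) else 1/2) ≤ 1 := by split_ifs <;> norm_num
    have m1 : min p.1 L1 ≤ p.1 := min_le_left _ _
    have m2 : min p.2 L2 ≤ p.2 := min_le_left _ _
    nlinarith [hγa1, hβa2, mul_nonneg hγ ha1.le, mul_nonneg hβ ha2.le,
      mul_le_mul_of_nonneg_left (mul_le_mul_of_nonneg_right d1 ha1.le) hγ,
      mul_le_mul_of_nonneg_left (mul_le_mul_of_nonneg_right d2 ha2.le) hβ]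
  have hWeq : ∀ p : ℝ × ℝ, 0 < p.1 → p.1 ≤ L1 → 0 < p.2 → p.2 ≤ L2 →
      (∫ q, payoff2 B v (1 - s) p q ∂Fs)
        = (v (1 - s) 0 - L1) + (v (1 - s) 1 - L2) := by
    intro p h1 h2 h3 h4
    rw [hW p h1.le h3.le, if_pos h1, if_pos h3, min_eq_left h2, min_eq_left h4,
      one_mul, one_mul]
    linarith [hγa1, hβa2]
  have hV : (0:ℝ) ≤ (v (1 - s) 0 - L1) + (v (1 - s) 1 - L2) := by linarith
  -- high-probability sets for the equality statements
  have hS0meas : MeasurableSet {p : ℝ × ℝ | 0 ≤ p.1 ∧ p.1 ≤ L1 ∧ 0 ≤ p.2 ∧ p.2 ≤ L2} := by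
    refine MeasurableSet.inter ?_ (MeasurableSet.inter ?_ (MeasurableSet.inter ?_ ?_))
    · exact measurableSet_le measurable_const measurable_fst
    · exact measurableSet_le measurable_fst measurable_const
    · exact measurableSet_le measurable_const measurable_snd
    · exact measurableSet_le measurable_snd measurable_const
  have hS1meas : MeasurableSet {p : ℝ × ℝ | 0 < p.1 ∧ p.1 ≤ L1 ∧ 0 < p.2 ∧ p.2 ≤ L2} := by
    refine MeasurableSet.inter ?_ (MeasurableSet.inter ?_ (MeasurableSet.inter ?_ ?_))
    · exact measurableSet_lt measurable_const measurable_fst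
    · exact measurableSet_le measurable_fst measurable_const
    · exact measurableSet_lt measurable_const measurable_snd
    · exact measurableSet_le measurable_snd measurable_const
  have hFsS0 : Fs {p : ℝ × ℝ | 0 ≤ p.1 ∧ p.1 ≤ L1 ∧ 0 ≤ p.2 ∧ p.2 ≤ L2} = 1 := by
    refine hFsSet _ ?_ ?_ ?_ <;> [rw [hμ1]; rw [hμ2]; rw [hμ3]] <;>
      refine unifSeg_eq_one _ _ hS0meas ?_
    · exact seg_mem_box 0 T2 T1 0 L1 L2 le_rfl hL1pos.le hT1nn hT1L1
        hT2nn hT2L2 le_rfl hL2pos.le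
    · exact seg_mem_box T1 0 L1 0 L1 L2 hT1nn hT1L1 hL1pos.le le_rfl
        le_rfl hL2pos.le le_rfl hL2pos.le
    · exact seg_mem_box 0 T2 0 L2 L1 L2 le_rfl hL1pos.le le_rfl hL1pos.le
        hT2nn hT2L2 hL2pos.le le_rfl
  have hμwS1 : μw {p : ℝ × ℝ | 0 < p.1 ∧ p.1 ≤ L1 ∧ 0 < p.2 ∧ p.2 ≤ L2} = 1 := by
    rw [hμw]
    exact unifSeg_eq_one' _ _ hS1meas (seg_mem_box_pos L1 L2 hL1pos hL2pos)
  -- assemble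
  constructor
  · intro i
    by_cases hi : i = s
    · rw [hi]
      simp only [eq_self_iff_true, if_true]
      exact ⟨hFsProb, hFsFeas⟩
    · have hiw : i = 1 - s := hfin3 i s hi
      rw [hiw]
      simp only [if_neg (hfin2 s)]
      exact ⟨hPw, hμwFeas⟩
  · intro i μ hμ
    haveI := hμ.1
    by_cases hi : i = s
    · rw [hi] at hμ ⊢
      simp only [eq_self_iff_true, if_true, if_neg (hfin2 s)]
      unfold expUtil2
      have hle : ∫ p, (∫ q, payoff2 B v s p q ∂μw) ∂μ ≤ 0 := by
        apply integral_le_const_of_ae le_rfl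
        filter_upwards [ae_mem_of_prob_one (hFeasMeas (B s)) hμ.2] with p hp
        obtain ⟨h1, h2, _⟩ := hp
        rw [hSform p h1 h2]
        have := min_le_left p.1 L1
        have := min_le_left p.2 L2
        linarith
      have heq : ∫ p, (∫ q, payoff2 B v s p q ∂μw) ∂Fs = 0 := by
        haveI := hFsProb
        apply integral_eq_const_of_ae
        filter_upwards [ae_mem_of_prob_one hS0meas hFsS0] with p hp
        obtain ⟨h1, h2, h3, h4⟩ := hp
        rw [hSform p h1 h3, min_eq_left h2, min_eq_left h4]
        ring
      linarith
    · have hiw : i = 1 - s := hfin3 i s hi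
      rw [hiw] at hμ ⊢
      simp only [if_neg (hfin2 s), hfin1 s, eq_self_iff_true, if_true]
      unfold expUtil2
      have hle : ∫ p, (∫ q, payoff2 B v (1 - s) p q ∂Fs) ∂μ
          ≤ (v (1 - s) 0 - L1) + (v (1 - s) 1 - L2) := by
        apply integral_le_const_of_ae hV
        filter_upwards [ae_mem_of_prob_one (hFeasMeas (B (1 - s))) hμ.2] with p hp
        exact hWle p hp.1 hp.2.1
      have heq : ∫ p, (∫ q, payoff2 B v (1 - s) p q ∂Fs) ∂μw
          = (v (1 - s) 0 - L1) + (v (1 - s) 1 - L2) := by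
        apply integral_eq_const_of_ae
        filter_upwards [ae_mem_of_prob_one hS1meas hμwS1] with p hp
        exact hWeq p hp.1 hp.2.1 hp.2.2.1 hp.2.2.2
      linarith
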